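/- Let λ ∈ ℝ, λ ≠ 0, and A > 0. Define u(x) = −(3√3/4)·tanh( sqrt(27/8)·λ·x ). Then for all x ∈ ℝ: u''(x) + ((A + 27λ²/4) − A)·u(x) = 4λ²·u(x)³; that is, u solves the Schrödinger-type equation u'' + (E − P)u = −(nk/2)·u^((4−n)/n) with E = A + 27λ²/4, constant potential P(x) = A, n = 1 and curvature parameter k = −8λ². -/

import Mathlib

open Real

lemma tanh_hasDerivAt (y : ℝ) : HasDerivAt Real.tanh (1 / Real.cosh y ^ 2) y := by
  have h := (Real.hasDerivAt_sinh y).div (Real.hasDerivAt_cosh y) (Real.cosh_pos y).ne'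
  have hid : Real.cosh y * Real.cosh y - Real.sinh y * Real.sinh y = 1 := by
    have := Real.cosh_sq_sub_sinh_sq y; nlinarith [this]
  have hfun : (fun x => Real.sinh x / Real.cosh x) = Real.tanh := by
    funext x; rw [Real.tanh_eq_sinh_div_cosh]
  rw [show (Real.sinh / Real.cosh) = Real.tanh from hfun] at h
  rw [hid] at h
  exact h

lemma key_algebra (lam A a c C S : ℝ) (hC : C ≠ 0)
    (ha2 : a ^ 2 = 27 / 16) (hc2 : c ^ 2 = 27 / 8 * lam ^ 2)
    (hid : C ^ 2 - S ^ 2 = 1) :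
    -a * c * (-(2 * C * S * c) / (C ^ 2) ^ 2) + ((A + 27 * lam ^ 2 / 4) - A) * (-a * (S / C))
      = 4 * lam ^ 2 * (-a * (S / C)) ^ 3 := by
  field_simp
  linear_combination (8 * a * S) * hc2 + (-27 * a * lam ^ 2 * S) * hid +
    (16 * a * S ^ 3 * lam ^ 2) * ha2

/-- The fourth example of Section 4: u(x) = −(3√3/4)·tanh(√(27/8)·λx)
solves the Schrödinger-type equation with E = A + 27λ²/4, constant potential
P = A, n = 1 and curvature parameter k = −8λ², i.e. u'' + (E − A)u = 4λ²u³. -/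
theorem tanh_schrodinger_solution
    (lam A : ℝ) (hlam : lam ≠ 0) (hA : 0 < A)
    (u : ℝ → ℝ)
    (hu : u = fun x => -(3 * Real.sqrt 3 / 4) * Real.tanh (Real.sqrt (27 / 8) * lam * x)) :
    ∀ x : ℝ,
      deriv (deriv u) x + ((A + 27 * lam ^ 2 / 4) - A) * u x
        = 4 * lam ^ 2 * u x ^ 3 := by
  intro x
  set a : ℝ := 3 * Real.sqrt 3 / 4 with ha
  set c : ℝ := Real.sqrt (27 / 8) * lam with hc
  -- first derivative
  have hD : ∀ y : ℝ, HasDerivAt u (-a * c / Real.cosh (c * y) ^ 2) y := by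
    intro y
    have h1 : HasDerivAt (fun x : ℝ => c * x) c y := by
      simpa using (hasDerivAt_id y).const_mul c
    have h2 := (tanh_hasDerivAt (c * y)).comp y h1
    have h3 := h2.const_mul (-a)
    rw [hu]
    have heq : -a * (1 / Real.cosh (c * y) ^ 2 * c) = -a * c / Real.cosh (c * y) ^ 2 := by
      ring
    rw [← heq]
    exact h3
  have hderiv : deriv u = fun y => -a * c / Real.cosh (c * y) ^ 2 := by
    funext y; exact (hD y).deriv
  -- second derivative
  have hch : Real.cosh (c * x) ^ 2 ≠ 0 := by positivity
  have hD2 : HasDerivAt (deriv u)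
      (-a * c * (-(2 * Real.cosh (c * x) * Real.sinh (c * x) * c) / (Real.cosh (c * x) ^ 2) ^ 2)) x := by
    rw [hderiv]
    have h1 : HasDerivAt (fun y : ℝ => c * y) c x := by
      simpa using (hasDerivAt_id x).const_mul c
    have h2 : HasDerivAt (fun y : ℝ => Real.cosh (c * y)) (Real.sinh (c * x) * c) x :=
      (Real.hasDerivAt_cosh (c * x)).comp x h1
    have h3 : HasDerivAt (fun y : ℝ => Real.cosh (c * y) ^ 2)
        (2 * Real.cosh (c * x) ^ 1 * (Real.sinh (c * x) * c)) x := h2.pow 2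
    have h4 := h3.inv hch
    have h5 := h4.const_mul (-a * c)
    have heq : -a * c * (-(2 * Real.cosh (c * x) ^ 1 * (Real.sinh (c * x) * c)) / (Real.cosh (c * x) ^ 2) ^ 2)
        = -a * c * (-(2 * Real.cosh (c * x) * Real.sinh (c * x) * c) / (Real.cosh (c * x) ^ 2) ^ 2) := by
      ring
    rw [← heq]
    simp only [div_eq_mul_inv]
    exact h5
  have hval := hD2.deriv
  rw [hval, hu]
  simp only
  rw [Real.tanh_eq_sinh_div_cosh]
  have hc2 : c ^ 2 = 27 / 8 * lam ^ 2 := by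
    rw [hc, mul_pow, sq_sqrt (by norm_num : (0:ℝ) ≤ 27 / 8)]
  have ha2 : a ^ 2 = 27 / 16 := by
    rw [ha, div_pow, mul_pow, sq_sqrt (by norm_num : (0:ℝ) ≤ 3)]
    norm_num
  exact key_algebra lam A a c _ _ (Real.cosh_pos (c * x)).ne' ha2 hc2
    (Real.cosh_sq_sub_sinh_sq (c * x))
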